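/- Allowed operations preserve the incompatibility-annihilating property (golden rule): if N is an incompatibility-annihilating channel and F(N) = Σ_{μ,k} p_μ D_{k|μ} ∘ N ∘ F_{k|μ}, where {p_μ} is a probability distribution, each D_{k|μ} is a channel, each F_{k|μ} is completely positive trace-non-increasing, and Σ_k F_{k|μ} is trace-preserving for each μ, then F(N) is incompatibility-annihilating. -/

import Mathlib

open Matrix
open scoped ComplexOrder

/-- Operators on a d-dimensional complex Hilbert space. -/
abbrev Mat (d : ℕ) := Matrix (Fin d) (Fin d) ℂ

/-- A measurement assemblage: `E x a` is the effect for outcome `a` of setting `x`. -/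
def IsAssemblage {d : ℕ} {ι κ : Type} [Fintype ι] [Fintype κ]
    (E : κ → ι → Mat d) : Prop :=
  (∀ x a, (E x a).PosSemidef) ∧ ∀ x, ∑ a, E x a = 1

/-- Joint measurability: a single finite-outcome POVM `G` together with conditional
probabilities `P a x λ` reproduces all effects. -/
def JointlyMeasurable {d : ℕ} {ι κ : Type} [Fintype ι] [Fintype κ]
    (E : κ → ι → Mat d) : Prop :=
  ∃ (Λ : Type) (_ : Fintype Λ), ∃ (G : Λ → Mat d) (P : ι → κ → Λ → ℝ),
    (∀ l, (G l).PosSemidef) ∧ (∑ l, G l = 1) ∧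
    (∀ a x l, 0 ≤ P a x l) ∧ (∀ x l, ∑ a, P a x l = 1) ∧
    (∀ a x, E x a = ∑ l, (P a x l : ℂ) • G l)

/-- Choi matrix of a superoperator. -/
def ChoiM {m : Type} [Fintype m] [DecidableEq m]
    (L : Matrix m m ℂ →ₗ[ℂ] Matrix m m ℂ) : Matrix (m × m) (m × m) ℂ :=
  Matrix.of fun p q => (L (Matrix.single p.1 q.1 1)) p.2 q.2

/-- Complete positivity via positive semidefiniteness of the Choi matrix. -/
def IsCP {m : Type} [Fintype m] [DecidableEq m]
    (L : Matrix m m ℂ →ₗ[ℂ] Matrix m m ℂ) : Prop := (ChoiM L).PosSemidef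

/-- Trace preservation. -/
def IsTP {m : Type} [Fintype m] [DecidableEq m]
    (L : Matrix m m ℂ →ₗ[ℂ] Matrix m m ℂ) : Prop := ∀ X, (L X).trace = X.trace

/-- Trace-non-increasing (on positive semidefinite inputs). -/
def IsTNI {m : Type} [Fintype m] [DecidableEq m]
    (L : Matrix m m ℂ →ₗ[ℂ] Matrix m m ℂ) : Prop :=
  ∀ X : Matrix m m ℂ, X.PosSemidef → ((L X).trace).re ≤ (X.trace).re

/-- A quantum channel: completely positive and trace-preserving. -/
def IsChannel {m : Type} [Fintype m] [DecidableEq m]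
    (L : Matrix m m ℂ →ₗ[ℂ] Matrix m m ℂ) : Prop := IsCP L ∧ IsTP L

/-- A filter: completely positive and trace-non-increasing. -/
def IsFilter {m : Type} [Fintype m] [DecidableEq m]
    (L : Matrix m m ℂ →ₗ[ℂ] Matrix m m ℂ) : Prop := IsCP L ∧ IsTNI L

/-- A channel is incompatibility-annihilating: after the channel, all measurement
statistics can be reproduced by a jointly-measurable assemblage. -/
def IsIA {d : ℕ} (N : Mat d →ₗ[ℂ] Mat d) : Prop :=
  ∀ (ι κ : Type) [Fintype ι] [Fintype κ] (E : κ → ι → Mat d), IsAssemblage E →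
    ∃ M : κ → ι → Mat d, IsAssemblage M ∧ JointlyMeasurable M ∧
      ∀ ρ : Mat d, ρ.PosSemidef → ρ.trace = 1 →
        ∀ a x, (N ρ * E x a).trace = (ρ * M x a).trace

section IAHelpers

set_option linter.unusedSectionVars false

variable {m : Type} [Fintype m] [DecidableEq m]

open scoped MatrixOrder Matrix.Norms.L2Operator in
private lemma psd_eq_ct_mul_self {n : Type} [Fintype n] [DecidableEq n] {A : Matrix n n ℂ}
    (hA : A.PosSemidef) : ∃ B : Matrix n n ℂ, A = Bᴴ * B := by
  obtain ⟨B, hB⟩ := CStarAlgebra.nonneg_iff_eq_star_mul_self.mp hA.nonneg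
  exact ⟨B, hB⟩

private lemma psd_sum {α : Type} (s : Finset α) (f : α → Matrix m m ℂ)
    (h : ∀ i ∈ s, (f i).PosSemidef) : (∑ i ∈ s, f i).PosSemidef :=
  Finset.sum_induction f _ (fun _ _ ha hb => ha.add hb) Matrix.PosSemidef.zero h

private lemma psd_smul {A : Matrix m m ℂ} (hA : A.PosSemidef) {c : ℝ} (hc : 0 ≤ c) :
    ((c : ℂ) • A).PosSemidef := by
  obtain ⟨B, rfl⟩ := psd_eq_ct_mul_self hA
  have h : (c:ℂ) • (Bᴴ * B) = ((Real.sqrt c : ℂ) • B)ᴴ * ((Real.sqrt c : ℂ) • B) := by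
    rw [Matrix.conjTranspose_smul, Matrix.smul_mul, Matrix.mul_smul, smul_smul]
    rw [Complex.star_def, Complex.conj_ofReal, ← Complex.ofReal_mul, Real.mul_self_sqrt hc]
  rw [h]
  exact Matrix.posSemidef_conjTranspose_mul_self _

private lemma psd_trace_real {A : Matrix m m ℂ} (hA : A.PosSemidef) :
    ∃ t : ℝ, 0 ≤ t ∧ A.trace = (t : ℂ) ∧ (t = 0 → A = 0) := by
  obtain ⟨B, rfl⟩ := psd_eq_ct_mul_self hA
  refine ⟨∑ j, ∑ i, Complex.normSq (B i j), Finset.sum_nonneg fun j _ =>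
    Finset.sum_nonneg fun i _ => Complex.normSq_nonneg _, ?_, ?_⟩
  · simp only [Matrix.trace, Matrix.diag, Matrix.mul_apply, Matrix.conjTranspose_apply]
    push_cast
    refine Finset.sum_congr rfl fun j _ => Finset.sum_congr rfl fun i _ => ?_
    rw [Complex.normSq_eq_conj_mul_self, Complex.star_def]
  · intro h
    have hB : B = 0 := by
      ext i j
      have h1 := (Finset.sum_eq_zero_iff_of_nonneg (fun j _ => Finset.sum_nonneg
        fun i _ => Complex.normSq_nonneg _)).mp h j (Finset.mem_univ j)
      have h2 := (Finset.sum_eq_zero_iff_of_nonneg (fun i _ =>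
        Complex.normSq_nonneg _)).mp h1 i (Finset.mem_univ i)
      simpa using Complex.normSq_eq_zero.mp h2
    simp [hB]

private lemma trace_stdBasis_mul (j i : m) (A : Matrix m m ℂ) :
    (Matrix.single j i 1 * A).trace = A i j := by
  rw [Matrix.trace, Finset.sum_eq_single j]
  · simp
  · intro k _ hk
    simp [Matrix.diag, Matrix.single_mul_apply_of_ne (h := hk)]
  · simp

private lemma eq_one_of_trace_mul (A : Matrix m m ℂ)
    (h : ∀ X : Matrix m m ℂ, (X * A).trace = X.trace) : A = 1 := by
  ext i j
  have h2 := h (Matrix.single j i 1)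
  rw [trace_stdBasis_mul] at h2
  rw [h2]
  by_cases hij : i = j
  · subst hij
    rw [Matrix.one_apply_eq, Matrix.trace, Finset.sum_eq_single i]
    · simp
    · intro b _ hb
      exact Matrix.single_apply_of_ne (i := i) (j := i) (c := (1 : ℂ)) (i' := b) (j' := b) (h := fun ⟨h1, _⟩ => hb h1.symm)
    · simp
  · rw [Matrix.one_apply_ne hij, Matrix.trace, Finset.sum_eq_zero]
    intro k _
    simp only [Matrix.diag]
    exact Matrix.single_apply_of_ne (i := j) (j := i) (c := (1 : ℂ)) (i' := k) (j' := k)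
      (h := fun ⟨h1, h2⟩ => hij (h2.trans h1.symm))

private lemma choi_expand (L : Matrix m m ℂ →ₗ[ℂ] Matrix m m ℂ) (X : Matrix m m ℂ) (p2 q2 : m) :
    L X p2 q2 = ∑ p1, ∑ q1, X p1 q1 * ChoiM L (p1, p2) (q1, q2) := by
  conv_lhs => rw [Matrix.matrix_eq_sum_single X, map_sum]
  rw [Matrix.sum_apply]
  refine Finset.sum_congr rfl fun p1 _ => ?_
  rw [map_sum, Matrix.sum_apply]
  refine Finset.sum_congr rfl fun q1 _ => ?_
  have h : Matrix.single p1 q1 (X p1 q1) = X p1 q1 • Matrix.single p1 q1 1 := by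
    rw [Matrix.smul_single, smul_eq_mul, mul_one]
  rw [h, _root_.map_smul, Matrix.smul_apply, smul_eq_mul]
  rfl

private lemma exists_kraus {L : Matrix m m ℂ →ₗ[ℂ] Matrix m m ℂ} (h : IsCP L) :
    ∃ K : m × m → Matrix m m ℂ, ∀ X, L X = ∑ r, K r * X * (K r)ᴴ := by
  obtain ⟨C, hC⟩ := psd_eq_ct_mul_self h
  refine ⟨fun r => Matrix.of fun p2 p1 => star (C r (p1, p2)), fun X => ?_⟩
  ext p2 q2
  rw [choi_expand L X p2 q2]
  simp only [hC]
  simp only [Matrix.sum_apply, Matrix.mul_apply, Matrix.conjTranspose_apply, Matrix.of_apply,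
    star_star, Finset.sum_mul, Finset.mul_sum]
  rw [Finset.sum_comm]
  conv_rhs => rw [Finset.sum_comm]
  refine Finset.sum_congr rfl fun q1 _ => ?_
  rw [Finset.sum_comm]
  refine Finset.sum_congr rfl fun r _ => Finset.sum_congr rfl fun p1 _ => ?_
  ring

/-- The Hilbert–Schmidt adjoint of a Kraus-represented map. -/
private noncomputable def adjK {α : Type} [Fintype α] (K : α → Matrix m m ℂ) (Y : Matrix m m ℂ) :
    Matrix m m ℂ := ∑ r, (K r)ᴴ * Y * K r

private lemma kraus_trace_mul {α : Type} [Fintype α] (K : α → Matrix m m ℂ)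
    (X Y : Matrix m m ℂ) :
    ((∑ r, K r * X * (K r)ᴴ) * Y).trace = (X * adjK K Y).trace := by
  rw [adjK, Matrix.sum_mul, Matrix.mul_sum, Matrix.trace_sum, Matrix.trace_sum]
  refine Finset.sum_congr rfl fun r _ => ?_
  rw [mul_assoc (K r * X), Matrix.trace_mul_comm, Matrix.trace_mul_comm X, ← mul_assoc]

private lemma kraus_psd {α : Type} [Fintype α] (K : α → Matrix m m ℂ) {X : Matrix m m ℂ}
    (hX : X.PosSemidef) : (∑ r, K r * X * (K r)ᴴ).PosSemidef :=
  psd_sum _ _ fun r _ => hX.mul_mul_conjTranspose_same (K r)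

private lemma adjK_psd {α : Type} [Fintype α] (K : α → Matrix m m ℂ) {Y : Matrix m m ℂ}
    (hY : Y.PosSemidef) : (adjK K Y).PosSemidef :=
  psd_sum _ _ fun r _ => hY.conjTranspose_mul_mul_same (K r)

private lemma adjK_sum {α β : Type} [Fintype α] (s : Finset β) (K : α → Matrix m m ℂ)
    (Y : β → Matrix m m ℂ) :
    adjK K (∑ b ∈ s, Y b) = ∑ b ∈ s, adjK K (Y b) := by
  simp only [adjK, Matrix.mul_sum, Matrix.sum_mul]
  exact Finset.sum_comm

private lemma adjK_smul {α : Type} [Fintype α] (K : α → Matrix m m ℂ) (c : ℂ)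
    (Y : Matrix m m ℂ) : adjK K (c • Y) = c • adjK K Y := by
  simp only [adjK, Matrix.mul_smul, Matrix.smul_mul, Finset.smul_sum]

private lemma adjK_one {α : Type} [Fintype α] (K : α → Matrix m m ℂ)
    (h : ∀ X : Matrix m m ℂ, (∑ r, K r * X * (K r)ᴴ).trace = X.trace) :
    adjK K 1 = 1 :=
  eq_one_of_trace_mul _ fun X => by rw [← kraus_trace_mul, mul_one, h]

private lemma trace_eq_of_state {N : Matrix m m ℂ →ₗ[ℂ] Matrix m m ℂ} {A B : Matrix m m ℂ}
    (h : ∀ ρ : Matrix m m ℂ, ρ.PosSemidef → ρ.trace = 1 → (N ρ * A).trace = (ρ * B).trace)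
    (σ : Matrix m m ℂ) (hσ : σ.PosSemidef) : (N σ * A).trace = (σ * B).trace := by
  obtain ⟨t, ht0, htr, hz⟩ := psd_trace_real hσ
  rcases ht0.eq_or_lt with h0 | hpos
  · rw [hz h0.symm]; simp
  · have hσeq : σ = (t : ℂ) • (((t⁻¹ : ℝ) : ℂ) • σ) := by
      rw [smul_smul, ← Complex.ofReal_mul, mul_inv_cancel₀ (ne_of_gt hpos),
        Complex.ofReal_one, one_smul]
    have h₀ : (((t⁻¹ : ℝ) : ℂ) • σ).PosSemidef := psd_smul hσ (by positivity)
    have htr₀ : (((t⁻¹ : ℝ) : ℂ) • σ).trace = 1 := by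
      rw [Matrix.trace_smul, htr, smul_eq_mul, ← Complex.ofReal_mul,
        inv_mul_cancel₀ (ne_of_gt hpos), Complex.ofReal_one]
    have key := h _ h₀ htr₀
    have l : (N σ * A).trace = (t:ℂ) * (N (((t⁻¹:ℝ):ℂ) • σ) * A).trace := by
      conv_lhs => rw [hσeq]
      rw [_root_.map_smul, Matrix.smul_mul, Matrix.trace_smul, smul_eq_mul]
    have r : (σ * B).trace = (t:ℂ) * ((((t⁻¹:ℝ):ℂ) • σ) * B).trace := by
      conv_lhs => rw [hσeq]
      rw [Matrix.smul_mul, Matrix.trace_smul, smul_eq_mul]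
    rw [l, r, key]

end IAHelpers

/-- golden rule: allowed operations — deterministic mixtures of
pre-processing instruments and post-processing channels — preserve the
incompatibility-annihilating property. -/
theorem allowedOperations_preserve_IA {d : ℕ} {μt κt : Type} [Fintype μt] [Fintype κt]
    (N : Mat d →ₗ[ℂ] Mat d) (hN : IsChannel N) (hNIA : IsIA N)
    (p : μt → ℝ) (hp0 : ∀ m, 0 ≤ p m) (hp1 : ∑ m, p m = 1)
    (D : μt → κt → (Mat d →ₗ[ℂ] Mat d)) (hD : ∀ m k, IsChannel (D m k))
    (F : μt → κt → (Mat d →ₗ[ℂ] Mat d)) (hF : ∀ m k, IsFilter (F m k))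
    (hinstr : ∀ m, IsTP (∑ k, F m k)) :
    IsIA (∑ m, ∑ k, (p m : ℂ) • (D m k ∘ₗ N ∘ₗ F m k)) := by
  classical
  intro ι κ _ _ E hE
  -- Kraus decompositions of the post-processing channels and the filters
  obtain ⟨KD, hKD⟩ := Classical.axiomOfChoice (fun m =>
    Classical.axiomOfChoice (fun k => exists_kraus (hD m k).1))
  obtain ⟨KF, hKF⟩ := Classical.axiomOfChoice (fun m =>
    Classical.axiomOfChoice (fun k => exists_kraus (hF m k).1))
  -- adjoint of D m k is unital
  have hDadj1 : ∀ m k, adjK (KD m k) 1 = 1 := fun m k =>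
    adjK_one _ (fun X => by rw [← hKD m k X]; exact (hD m k).2 X)
  -- sum over k of adjoints of F m k is unital
  have hFadj1 : ∀ m, (∑ k, adjK (KF m k) 1) = 1 := by
    intro m
    apply eq_one_of_trace_mul
    intro X
    rw [Matrix.mul_sum, Matrix.trace_sum]
    have h1 : ∀ k, (X * adjK (KF m k) 1).trace = ((F m k) X).trace := fun k => by
      rw [← kraus_trace_mul, mul_one, ← hKF m k X]
    simp only [h1]
    have h2 := hinstr m X
    rwa [LinearMap.sum_apply, Matrix.trace_sum] at h2
  -- the pre-processed assemblage
  have hE'A : IsAssemblage (fun (y : κ × μt × κt) (a : ι) => adjK (KD y.2.1 y.2.2) (E y.1 a)) := by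
    refine ⟨fun y a => adjK_psd _ (hE.1 y.1 a), fun y => ?_⟩
    rw [← adjK_sum, hE.2, hDadj1]
  obtain ⟨M', hM'A, hM'JM, hM'stat⟩ :=
    hNIA ι (κ × μt × κt) (fun y a => adjK (KD y.2.1 y.2.2) (E y.1 a)) hE'A
  -- extend the statistics equality to all positive semidefinite inputs
  have hstat : ∀ (x : κ) (m : μt) (k : κt) (a : ι) (σ : Mat d), σ.PosSemidef →
      (N σ * adjK (KD m k) (E x a)).trace = (σ * M' (x, m, k) a).trace := by
    intro x m k a σ hσ
    exact trace_eq_of_state (fun ρ h1 h2 => hM'stat ρ h1 h2 a (x, m, k)) σ hσ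
  -- the simulating assemblage
  refine ⟨fun x a => ∑ m, ∑ k, (p m : ℂ) • adjK (KF m k) (M' (x, m, k) a),
    ⟨?_, ?_⟩, ?_, ?_⟩
  · -- positivity
    intro x a
    exact psd_sum _ _ fun m _ => psd_sum _ _ fun k _ =>
      psd_smul (adjK_psd _ (hM'A.1 (x, m, k) a)) (hp0 m)
  · -- normalization
    intro x
    calc ∑ a, ∑ m, ∑ k, (p m : ℂ) • adjK (KF m k) (M' (x, m, k) a)
        = ∑ m, ∑ a, ∑ k, (p m : ℂ) • adjK (KF m k) (M' (x, m, k) a) := Finset.sum_comm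
      _ = ∑ m, ∑ k, ∑ a, (p m : ℂ) • adjK (KF m k) (M' (x, m, k) a) :=
          Finset.sum_congr rfl fun m _ => Finset.sum_comm
      _ = ∑ m, ∑ k, (p m : ℂ) • adjK (KF m k) 1 := by
          refine Finset.sum_congr rfl fun m _ => Finset.sum_congr rfl fun k _ => ?_
          rw [← Finset.smul_sum, ← adjK_sum, hM'A.2]
      _ = ∑ m, (p m : ℂ) • (1 : Mat d) := by
          refine Finset.sum_congr rfl fun m _ => ?_
          rw [← Finset.smul_sum, hFadj1 m]
      _ = 1 := by
          rw [← Finset.sum_smul]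
          have h3 : (∑ m, (p m : ℂ)) = 1 := by exact_mod_cast hp1
          rw [h3, one_smul]
  · -- joint measurability
    obtain ⟨Λ, _, G, P, hGpsd, hGsum, hP0, hP1, hMrep⟩ := hM'JM
    refine ⟨μt × κt × Λ, inferInstance,
      fun t => (p t.1 : ℂ) • adjK (KF t.1 t.2.1) (G t.2.2),
      fun a x t => P a (x, t.1, t.2.1) t.2.2, ?_, ?_, ?_, ?_, ?_⟩
    · intro t
      exact psd_smul (adjK_psd _ (hGpsd t.2.2)) (hp0 t.1)
    · rw [Fintype.sum_prod_type]
      calc ∑ m, ∑ t : κt × Λ, (p m : ℂ) • adjK (KF m t.1) (G t.2)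
          = ∑ m, ∑ k, ∑ l, (p m : ℂ) • adjK (KF m k) (G l) := by
            refine Finset.sum_congr rfl fun m _ => ?_
            rw [Fintype.sum_prod_type]
        _ = ∑ m, ∑ k, (p m : ℂ) • adjK (KF m k) 1 := by
            refine Finset.sum_congr rfl fun m _ => Finset.sum_congr rfl fun k _ => ?_
            rw [← Finset.smul_sum, ← adjK_sum, hGsum]
        _ = ∑ m, (p m : ℂ) • (1 : Mat d) := by
            refine Finset.sum_congr rfl fun m _ => ?_
            rw [← Finset.smul_sum, hFadj1 m]
        _ = 1 := by
            rw [← Finset.sum_smul]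
            have h3 : (∑ m, (p m : ℂ)) = 1 := by exact_mod_cast hp1
            rw [h3, one_smul]
    · intro a x t
      exact hP0 a (x, t.1, t.2.1) t.2.2
    · intro x t
      exact hP1 (x, t.1, t.2.1) t.2.2
    · intro a x
      rw [Fintype.sum_prod_type]
      refine Finset.sum_congr rfl fun m _ => ?_
      rw [Fintype.sum_prod_type]
      refine Finset.sum_congr rfl fun k _ => ?_
      rw [hMrep a (x, m, k), adjK_sum, Finset.smul_sum]
      refine Finset.sum_congr rfl fun l _ => ?_
      rw [adjK_smul, smul_comm]
  · -- statistics
    intro ρ hρ hρtr a x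
    simp only [LinearMap.sum_apply, LinearMap.smul_apply, LinearMap.comp_apply,
      Matrix.sum_mul, Matrix.smul_mul, Matrix.mul_sum, Matrix.mul_smul,
      Matrix.trace_sum, Matrix.trace_smul]
    refine Finset.sum_congr rfl fun m _ => Finset.sum_congr rfl fun k _ => ?_
    congr 1
    have hFρ : (F m k ρ).PosSemidef := by
      rw [hKF m k ρ]; exact kraus_psd _ hρ
    calc (D m k (N (F m k ρ)) * E x a).trace
        = (N (F m k ρ) * adjK (KD m k) (E x a)).trace := by
          rw [hKD m k (N (F m k ρ)), kraus_trace_mul]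
      _ = (F m k ρ * M' (x, m, k) a).trace := hstat x m k a _ hFρ
      _ = (ρ * adjK (KF m k) (M' (x, m, k) a)).trace := by
          rw [hKF m k ρ, kraus_trace_mul]
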